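/- Let Λ be a finite abelian subgroup of (ℝ/ℤ)^{2^{r+2}−1} with wt(y) ≤ 2^{r+1} for all y ∈ Λ. If x_1, …, x_{r+2} ∈ Λ are such that the (r+2) × (2^{r+2}−1) matrix A whose rows are x_1, …, x_{r+2} has support matrix equal to A(r+2) (i.e., A_{ij} ≠ 0 in ℝ/ℤ iff A(r+2)_{ij} = 1), then every entry of A lies in {0, 1/2}, so A = M(r+2). -/
import Mathlib

/-- The column index set of `A(r)`: the nonzero vectors of `𝔽₂^r`. -/
def Col (r : ℕ) : Type := {v : Fin r → ZMod 2 // v ≠ 0}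

noncomputable instance (r : ℕ) : Fintype (Col r) := by unfold Col; infer_instance

/-- `wt y`: the number of nonzero coordinates. -/
noncomputable def wt {r : ℕ} (y : Col r → AddCircle (1 : ℝ)) : ℕ :=
  Nat.card {c : Col r // y c ≠ 0}


lemma half_of (a : AddCircle (1:ℝ)) (h2 : a + a = 0) (h0 : a ≠ 0) :
    a = (((1:ℝ)/2 : ℝ) : AddCircle (1:ℝ)) := by
  induction a using QuotientAddGroup.induction_on with
  | H x =>
    rw [← QuotientAddGroup.mk_add, QuotientAddGroup.eq_zero_iff,
      AddSubgroup.mem_zmultiples_iff] at h2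
    obtain ⟨k, hk⟩ := h2
    simp only [zsmul_eq_mul, mul_one] at hk
    rcases Int.even_or_odd k with ⟨m, hm⟩ | ⟨m, hm⟩
    · exfalso
      apply h0
      rw [QuotientAddGroup.eq_zero_iff, AddSubgroup.mem_zmultiples_iff]
      refine ⟨m, ?_⟩
      simp only [zsmul_eq_mul, mul_one]
      push_cast [hm] at hk; linarith
    · rw [QuotientAddGroup.eq, AddSubgroup.mem_zmultiples_iff]
      refine ⟨-m, ?_⟩
      simp only [zsmul_eq_mul, mul_one]
      push_cast [hm] at hk ⊢; linarith

lemma card_ne_ne {n : ℕ} (i j : Fin (n+2)) (hij : i ≠ j) :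
    Fintype.card {k : Fin (n+2) // k ≠ i ∧ k ≠ j} = n := by
  rw [Fintype.card_subtype]
  have : (Finset.univ.filter (fun k : Fin (n+2) => k ≠ i ∧ k ≠ j))
      = (Finset.univ \ {i, j}) := by
    ext k; simp [and_comm]
  rw [this, Finset.card_sdiff_of_subset (by simp)]
  rw [Finset.card_insert_of_notMem (by simp [hij]), Finset.card_singleton]
  simp

lemma card_pair {n : ℕ} (i j : Fin (n+2)) (hij : i ≠ j) (a b : ZMod 2) :
    Nat.card {v : Fin (n+2) → ZMod 2 // v i = a ∧ v j = b} = 2 ^ n := by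
  have e : {v : Fin (n+2) → ZMod 2 // v i = a ∧ v j = b}
      ≃ ({k : Fin (n+2) // k ≠ i ∧ k ≠ j} → ZMod 2) := by
    refine ⟨fun v k => v.1 k.1,
      fun f => ⟨fun k => if h1 : k = i then a else if h2 : k = j then b else f ⟨k, h1, h2⟩,
        by simp [hij.symm]⟩, ?_, ?_⟩
    · rintro ⟨v, hv1, hv2⟩
      ext k
      by_cases h1 : k = i
      · simp [h1, hv1]
      · by_cases h2 : k = j
        · simp [h1, h2, hv2, Ne.symm hij]
        · simp [h1, h2]
    · intro f
      ext k
      simp [k.2.1, k.2.2]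
  rw [Nat.card_congr e, Nat.card_eq_fintype_card, Fintype.card_fun,
    card_ne_ne i j hij]
  simp [ZMod]

lemma card_single {n : ℕ} (j : Fin (n+2)) (a : ZMod 2) :
    Nat.card {v : Fin (n+2) → ZMod 2 // v j = a} = 2 ^ (n+1) := by
  have e : {v : Fin (n+2) → ZMod 2 // v j = a}
      ≃ ({k : Fin (n+2) // k ≠ j} → ZMod 2) := by
    refine ⟨fun v k => v.1 k.1,
      fun f => ⟨fun k => if h1 : k = j then a else f ⟨k, h1⟩, by simp⟩, ?_, ?_⟩
    · rintro ⟨v, hv⟩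
      ext k
      by_cases h1 : k = j
      · simp [h1, hv]
      · simp [h1]
    · intro f
      ext k
      simp [k.2]
  rw [Nat.card_congr e, Nat.card_eq_fintype_card, Fintype.card_fun,
    Fintype.card_subtype_compl, Fintype.card_subtype_eq]
  simp [ZMod]


lemma zmod2_eq_zero {a : ZMod 2} (h : ¬ a = 1) : a = 0 := by revert a h; decide

/-- transfer `ncard` of column sets to `Nat.card` of vector subtypes -/
lemma ncard_col {n : ℕ} (S : Set (Fin n → ZMod 2)) (h0 : ∀ v ∈ S, v ≠ 0) :
    (Subtype.val ⁻¹' S : Set (Col n)).ncard = Nat.card S := by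
  rw [← Nat.card_coe_set_eq]
  exact Nat.card_congr ⟨fun c => ⟨c.1.1, c.2⟩, fun v => ⟨⟨v.1, h0 _ v.2⟩, v.2⟩,
    fun c => rfl, fun v => rfl⟩

/-- key pigeonhole: a group element nonzero on a set of size `2^(r+1)` must
vanish outside it -/
lemma key {r : ℕ} {Λ : AddSubgroup (Col (r + 2) → AddCircle (1 : ℝ))}
    (hwt : ∀ y ∈ Λ, wt y ≤ 2 ^ (r + 1))
    {y : Col (r + 2) → AddCircle (1 : ℝ)} (hy : y ∈ Λ)
    {T : Set (Col (r + 2))} (hT : T.ncard = 2 ^ (r + 1))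
    (hTy : ∀ d ∈ T, y d ≠ 0) {c : Col (r + 2)} (hc : c ∉ T) : y c = 0 := by
  by_contra h
  have hwty : wt y = {d : Col (r+2) | y d ≠ 0}.ncard := by
    rw [wt, ← Nat.card_coe_set_eq]
    rfl
  have hsub : insert c T ⊆ {d : Col (r+2) | y d ≠ 0} := by
    rintro d (rfl | hd)
    · exact h
    · exact hTy d hd
  have h1 : (insert c T).ncard = 2 ^ (r+1) + 1 := by
    rw [Set.ncard_insert_of_notMem hc T.toFinite, hT]
  have h2 : (insert c T).ncard ≤ {d : Col (r+2) | y d ≠ 0}.ncard :=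
    Set.ncard_le_ncard hsub (Set.toFinite _)
  have := hwt y hy
  omega

theorem stmt_13 (r : ℕ) (Λ : AddSubgroup (Col (r + 2) → AddCircle (1 : ℝ)))
    (hfin : (Λ : Set (Col (r + 2) → AddCircle (1 : ℝ))).Finite)
    (hwt : ∀ y ∈ Λ, wt y ≤ 2 ^ (r + 1))
    (x : Fin (r + 2) → (Col (r + 2) → AddCircle (1 : ℝ)))
    (hxΛ : ∀ i, x i ∈ Λ)
    -- the support matrix of the matrix with rows `x i` equals `A(r+2)`
    (hsupp : ∀ (i : Fin (r + 2)) (c : Col (r + 2)), x i c ≠ 0 ↔ c.val i = 1) :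
    ∀ (i : Fin (r + 2)) (c : Col (r + 2)),
      x i c = if c.val i = 1 then (((1 : ℝ) / 2 : ℝ) : AddCircle (1 : ℝ)) else 0 := by
  have hzero : ∀ (i : Fin (r+2)) (c : Col (r+2)), c.val i ≠ 1 → x i c = 0 := by
    intro i c h
    by_contra h'
    exact h ((hsupp i c).mp h')
  -- Step 1: two-torsion at columns with at least two ones in the support
  have pair : ∀ (i j : Fin (r+2)) (c : Col (r+2)), i ≠ j →
      c.val i = 1 → c.val j = 1 → x i c + x i c = 0 := by
    intro i j c hij hci hcj
    -- the set of columns with exactly one of the coords i, j equal to 1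
    set T : Set (Col (r+2)) :=
      {d : Col (r+2) | d.val i = 1 ∧ d.val j = 0} ∪
      {d : Col (r+2) | d.val i = 0 ∧ d.val j = 1} with hTdef
    have hA : ({d : Col (r+2) | d.val i = 1 ∧ d.val j = 0}).ncard = 2 ^ r := by
      have := ncard_col {v : Fin (r+2) → ZMod 2 | v i = 1 ∧ v j = 0}
        (fun v hv h0 => by rw [h0] at hv; exact one_ne_zero hv.1.symm)
      exact this.trans (card_pair i j hij 1 0)
    have hB : ({d : Col (r+2) | d.val i = 0 ∧ d.val j = 1}).ncard = 2 ^ r := by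
      have := ncard_col {v : Fin (r+2) → ZMod 2 | v i = 0 ∧ v j = 1}
        (fun v hv h0 => by rw [h0] at hv; exact one_ne_zero hv.2.symm)
      exact this.trans (card_pair i j hij 0 1)
    have hTcard : T.ncard = 2 ^ (r+1) := by
      rw [hTdef, Set.ncard_union_eq ?_ (Set.toFinite _) (Set.toFinite _)]
      · rw [hA, hB]; ring
      · rw [Set.disjoint_left]
        rintro d ⟨hd1, _⟩ ⟨hd2, _⟩
        rw [hd1] at hd2
        exact one_ne_zero hd2
    have hcT : c ∉ T := by
      rintro (⟨_, h2⟩ | ⟨h1, _⟩)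
      · rw [hcj] at h2; exact one_ne_zero h2
      · rw [hci] at h1; exact one_ne_zero h1
    have hplus : (x i + x j) c = 0 := by
      refine key hwt (AddSubgroup.add_mem Λ (hxΛ i) (hxΛ j)) hTcard ?_ hcT
      rintro d (⟨hd1, hd2⟩ | ⟨hd1, hd2⟩) <;> simp only [Pi.add_apply]
      · rw [hzero j d (by rw [hd2]; exact zero_ne_one), add_zero]
        exact (hsupp i d).mpr hd1
      · rw [hzero i d (by rw [hd1]; exact zero_ne_one), zero_add]
        exact (hsupp j d).mpr hd2
    have hminus : (x i - x j) c = 0 := by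
      refine key hwt (AddSubgroup.sub_mem Λ (hxΛ i) (hxΛ j)) hTcard ?_ hcT
      rintro d (⟨hd1, hd2⟩ | ⟨hd1, hd2⟩) <;> simp only [Pi.sub_apply]
      · rw [hzero j d (by rw [hd2]; exact zero_ne_one), sub_zero]
        exact (hsupp i d).mpr hd1
      · rw [hzero i d (by rw [hd1]; exact zero_ne_one), zero_sub]
        exact neg_ne_zero.mpr ((hsupp j d).mpr hd2)
    have : x i c + x i c = (x i + x j) c + (x i - x j) c := by
      simp only [Pi.add_apply, Pi.sub_apply]; abel
    rw [this, hplus, hminus, add_zero]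
  -- Step 2: two-torsion everywhere on the support
  have tor : ∀ (i : Fin (r+2)) (c : Col (r+2)), c.val i = 1 →
      x i c + x i c = 0 := by
    intro i c hci
    by_cases hex : ∃ j, j ≠ i ∧ c.val j = 1
    · obtain ⟨j, hji, hcj⟩ := hex
      exact pair i j c (Ne.symm hji) hci hcj
    · push_neg at hex
      obtain ⟨j, hji⟩ := Fintype.exists_ne_of_one_lt_card
        (by rw [Fintype.card_fin]; omega) i
      set T : Set (Col (r+2)) := {d : Col (r+2) | d.val j = 1} with hTdef
      have hTcard : T.ncard = 2 ^ (r+1) := by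
        have := ncard_col {v : Fin (r+2) → ZMod 2 | v j = 1}
          (fun v hv h0 => by rw [h0] at hv; exact one_ne_zero hv.symm)
        rw [hTdef]
        exact this.trans (card_single j 1)
      have hcT : c ∉ T := by
        intro h
        exact (hex j hji) h
      have hy : (x i + x i + x j) c = 0 := by
        refine key hwt (AddSubgroup.add_mem Λ
          (AddSubgroup.add_mem Λ (hxΛ i) (hxΛ i)) (hxΛ j)) hTcard ?_ hcT
        intro d hd
        simp only [Pi.add_apply]
        have hdj : d.val j = 1 := hd
        by_cases hdi : d.val i = 1
        · rw [pair i j d (Ne.symm hji) hdi hdj, zero_add]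
          exact (hsupp j d).mpr hdj
        · rw [hzero i d hdi, add_zero, zero_add]
          exact (hsupp j d).mpr hdj
      have hxj : x j c = 0 := hzero j c (fun h => (hex j hji) h)
      simpa [Pi.add_apply, hxj] using hy
  intro i c
  by_cases hci : c.val i = 1
  · rw [if_pos hci]
    exact half_of _ (tor i c hci) ((hsupp i c).mpr hci)
  · rw [if_neg hci]
    exact hzero i c hci
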